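/- Let M be a finite Frobenius bimodule over a finite ring R, C ⊆ M^n a left R-submodule, and f : C → M^n a left R-linear map preserving the Rosenbloom–Tsfasman weight. Then there exists an invertible lower triangular matrix A ∈ GL_n(R) with f(v) = vA for all v ∈ C; in particular f extends to an RT-weight-preserving automorphism of M^n. -/

import Mathlib

open MulOpposite
open Function

section Aux1

noncomputable instance : RootableBy ℂˣ ℕ :=
  rootableByOfPowLeftSurj _ _ (fun {n} hn x => by
    obtain ⟨z, hz⟩ := IsAlgClosed.exists_pow_nat_eq (x : ℂ) (Nat.pos_of_ne_zero hn)
    have hz0 : z ≠ 0 := by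
      intro h
      rw [h, zero_pow hn] at hz
      exact x.ne_zero hz.symm
    exact ⟨Units.mk0 z hz0, Units.ext (by simpa using hz)⟩)

noncomputable instance : RootableBy ℂˣ ℤ := Group.rootableByIntOfRootableByNat ℂˣ

noncomputable instance : DivisibleBy (Additive ℂˣ) ℤ where
  div a n := Additive.ofMul (RootableBy.root a.toMul n)
  div_zero a := congrArg Additive.ofMul (RootableBy.root_zero a.toMul)
  div_cancel a hn := congrArg Additive.ofMul (RootableBy.root_cancel a.toMul hn)

noncomputable instance : Module.Injective ℤ (Additive ℂˣ) :=
  (Module.Baer.of_divisible _).injective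

universe u

noncomputable instance : Module.Injective ℤ (ULift.{u} (Additive ℂˣ)) :=
  Module.ulift_injective_of_injective ℤ (inferInstance)

/-- characters with values in `ℂˣ` extend along injective maps of abelian groups -/
theorem AddChar.extend_of_injective {A B : Type u} [AddCommGroup A] [AddCommGroup B]
    (f : A →+ B) (hf : Function.Injective f) (φ : AddChar A ℂˣ) :
    ∃ ψ : AddChar B ℂˣ, ∀ a, ψ (f a) = φ a := by
  classical
  let φ' : A →ₗ[ℤ] ULift.{u} (Additive ℂˣ) :=
    (ULift.moduleEquiv.symm.toLinearMap : Additive ℂˣ →ₗ[ℤ] _) ∘ₗ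
      (AddChar.toAddMonoidHomEquiv φ).toIntLinearMap
  obtain ⟨h, hh⟩ := Module.Injective.out (f.toIntLinearMap) hf φ'
  refine ⟨AddChar.toAddMonoidHomEquiv.symm
    (AddEquiv.ulift.toAddMonoidHom.comp h.toAddMonoidHom), fun a => ?_⟩
  have := hh a
  have : (AddEquiv.ulift.toAddMonoidHom.comp h.toAddMonoidHom) (f a) =
      (AddChar.toAddMonoidHomEquiv φ) a := by
    show ULift.down (h (f a)) = _
    rw [show h (f a) = φ' a from hh a]
    rfl
  simpa using congrArg Additive.toMul this

/-- characters of a finite abelian group separate points -/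
theorem AddChar.exists_apply_ne_one_of_ne_zero {G : Type u} [AddCommGroup G] [Finite G]
    {a : G} (ha : a ≠ 0) : ∃ ψ : AddChar G ℂˣ, ψ a ≠ 1 := by
  have : NeZero ((Monoid.exponent (Multiplicative G) : ℂ)) := by
    refine ⟨?_⟩
    have h : Monoid.exponent (Multiplicative G) ≠ 0 :=
      (Monoid.ExponentExists.of_finite).exponent_ne_zero
    exact_mod_cast Nat.cast_ne_zero.mpr h
  obtain ⟨φ, hφ⟩ := CommGroup.exists_apply_ne_one_of_hasEnoughRootsOfUnity
    (Multiplicative G) ℂ (a := Multiplicative.ofAdd a) (by simpa using ha)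
  exact ⟨AddChar.toMonoidHomEquiv.symm φ, by simpa using hφ⟩


end Aux1

/-- `χ` is a (two-sided) generating character of the finite `(R,R)`-bimodule `M`:
the map `r ↦ r·χ` (where `(r·χ)(v) = χ(v·r)`, using the right action of `R` on `M`)
and the map `r ↦ χ·r` (where `(χ·r)(v) = χ(r·v)`) are bijections from `R` onto the
character group `M̂`, i.e. `M̂` is free of rank one as a left and as a right `R`-module
with basis `χ`. -/
def IsGenChar (R M : Type*) [Ring R] [AddCommGroup M]
    [Module R M] [Module Rᵐᵒᵖ M] (χ : AddChar M ℂˣ) : Prop :=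
  (Function.Injective fun r : R => fun v : M => χ (op r • v)) ∧
  (∀ ψ : AddChar M ℂˣ, ∃ r : R, ∀ v : M, ψ v = χ (op r • v)) ∧
  (Function.Injective fun r : R => fun v : M => χ (r • v)) ∧
  (∀ ψ : AddChar M ℂˣ, ∃ r : R, ∀ v : M, ψ v = χ (r • v))

/-- `M` is a Frobenius bimodule over `R`: `_R M ≅ _R R̂` and `M_R ≅ R̂_R`, equivalently
the character bimodule `M̂` is free of rank one on each side, with a common generator. -/
def IsFrobeniusBimodule (R M : Type*) [Ring R] [AddCommGroup M]
    [Module R M] [Module Rᵐᵒᵖ M] : Prop :=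
  ∃ χ : AddChar M ℂˣ, IsGenChar R M χ


open Finset Classical in
/-- The Rosenbloom–Tsfasman weight of `v ∈ M^n`: `0` if `v = 0`, and `max{i : vᵢ ≠ 0}`
(with positions numbered `1,…,n`) otherwise. -/
noncomputable def rtWeight {M : Type*} [Zero M] {n : ℕ} (v : Fin n → M) : ℕ :=
  (Finset.univ.filter (fun i : Fin n => v i ≠ 0)).sup (fun i => i.1 + 1)

lemma AddChar.map_finset_sum {A : Type*} [AddCommMonoid A] {ι : Type*}
    (ψ : AddChar A ℂˣ) (s : Finset ι) (f : ι → A) :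
    ψ (∑ i ∈ s, f i) = ∏ i ∈ s, ψ (f i) := by
  classical
  induction s using Finset.cons_induction with
  | empty => simp [AddChar.map_zero_eq_one]
  | cons a s ha ih => rw [Finset.sum_cons, Finset.prod_cons, AddChar.map_add_eq_mul, ih]

section Frob

variable {R M : Type*} [Ring R] [AddCommGroup M] [Module R M] [Module Rᵐᵒᵖ M]
  [SMulCommClass R Rᵐᵒᵖ M] {χ : AddChar M ℂˣ}

lemma IsGenChar.sep [Finite M] (hχ : IsGenChar R M χ) {y : M}
    (h : ∀ t : R, χ (t • y) = 1) : y = 0 := by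
  by_contra hy
  obtain ⟨ψ, hψ⟩ := AddChar.exists_apply_ne_one_of_ne_zero hy
  obtain ⟨t, ht⟩ := hχ.2.2.2 ψ
  exact hψ (by rw [ht y, h t])

lemma IsGenChar.eq_of_smul [Finite M] (hχ : IsGenChar R M χ) {a b : M}
    (h : ∀ t : R, χ (t • a) = χ (t • b)) : a = b := by
  have : a - b = 0 := hχ.sep (fun t => by
    rw [smul_sub, AddChar.map_sub_eq_div, h t, div_self'])
  exact sub_eq_zero.mp this

/-- Every linear map from a submodule of `M^ι` to `M` is given by right coefficients. -/
theorem IsGenChar.repr_pi [Finite M] (hχ : IsGenChar R M χ) {ι : Type*} [Fintype ι]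
    [DecidableEq ι] (D : Submodule R (ι → M)) (g : ↥D →ₗ[R] M) :
    ∃ r : ι → R, ∀ d : ↥D, g d = ∑ i, op (r i) • (d : ι → M) i := by
  classical
  obtain ⟨ψ, hψ⟩ := AddChar.extend_of_injective (D.subtype.toAddMonoidHom)
    (D.injective_subtype) (χ.compAddMonoidHom g.toAddMonoidHom)
  have H : ∀ i : ι, ∃ r : R, ∀ v : M,
      (ψ.compAddMonoidHom (AddMonoidHom.single (fun _ : ι => M) i)) v = χ (op r • v) :=
    fun i => hχ.2.1 _
  choose r hr using H
  refine ⟨r, fun d => ?_⟩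
  have key : ∀ d : ↥D, χ (g d) = χ (∑ i, op (r i) • (d : ι → M) i) := by
    intro d
    have h1 : χ (g d) = ψ (d : ι → M) := (hψ d).symm
    have h2 : ((d : ι → M)) = ∑ i, Pi.single i ((d : ι → M) i) :=
      (Finset.univ_sum_single _).symm
    have h3 : ψ ((d : ι → M)) = ∏ i, χ (op (r i) • (d : ι → M) i) := by
      conv_lhs => rw [h2]
      rw [AddChar.map_finset_sum]
      exact Finset.prod_congr rfl fun i _ => hr i _
    rw [h1, h3]
    exact (AddChar.map_finset_sum χ _ _).symm
  refine hχ.eq_of_smul (fun t => ?_)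
  have := key (t • d)
  have hv : ((t • d : ↥D) : ι → M) = t • (d : ι → M) := rfl
  rw [map_smul, hv] at this
  calc χ (t • g d) = χ (∑ i, op (r i) • (t • (d : ι → M)) i) := this
    _ = χ (t • ∑ i, op (r i) • (d : ι → M) i) := by
        rw [Finset.smul_sum]
        congr 1
        refine Finset.sum_congr rfl fun i _ => ?_
        rw [Pi.smul_apply]
        exact (smul_comm t (op (r i)) ((d : ι → M) i)).symm

/-- Every linear map from a submodule of `M` to `M` is a right multiplication. -/
theorem IsGenChar.repr_one [Finite M] (hχ : IsGenChar R M χ)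
    (E : Submodule R M) (g : ↥E →ₗ[R] M) :
    ∃ r : R, ∀ e : ↥E, g e = op r • (e : M) := by
  obtain ⟨ψ, hψ⟩ := AddChar.extend_of_injective (E.subtype.toAddMonoidHom)
    (E.injective_subtype) (χ.compAddMonoidHom g.toAddMonoidHom)
  obtain ⟨r, hr⟩ := hχ.2.1 ψ
  refine ⟨r, fun e => ?_⟩
  refine hχ.eq_of_smul (fun t => ?_)
  have key : ∀ e : ↥E, χ (g e) = χ (op r • (e : M)) := fun e => by
    rw [← hr ((e : M))]; exact (hψ e).symm
  have := key (t • e)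
  have hv : ((t • e : ↥E) : M) = t • (e : M) := rfl
  rw [map_smul, hv] at this
  rw [smul_comm t (op r)]
  exact this

lemma IsGenChar.isUnit_of_op_injective [Finite M] [Finite R] (hχ : IsGenChar R M χ)
    {r : R} (hinj : Injective fun m : M => op r • m) : IsUnit r := by
  have hsurj : Surjective fun m : M => op r • m :=
    Finite.injective_iff_surjective.mp hinj
  have hL : Injective fun s : R => r * s := by
    intro s s' hss
    have hss' : r * s = r * s' := hss
    refine hχ.1 ?_
    funext v
    obtain ⟨w, hw⟩ := hsurj v
    have hw' : op r • w = v := hw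
    have e : ∀ u : R, χ (op u • v) = χ (op (r * u) • w) := fun u => by
      rw [← hw', ← mul_smul, ← op_mul]
    show χ (op s • v) = χ (op s' • v)
    rw [e s, e s', hss']
  obtain ⟨s, hs⟩ := Finite.injective_iff_surjective.mp hL 1
  have hs' : r * s = 1 := hs
  have hsr : s * r = 1 := by
    have h2 : r * (s * r) = r * 1 := by rw [← mul_assoc, hs', one_mul, mul_one]
    exact hL h2
  exact ⟨⟨r, s, hs', hsr⟩, rfl⟩

end Frob

section Graph

variable {R M : Type*} [Ring R] [AddCommGroup M] [Module R M] [Module Rᵐᵒᵖ M]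
  [SMulCommClass R Rᵐᵒᵖ M] {χ : AddChar M ℂˣ}

/-- right multiplication by `r` as a left-linear endomorphism -/
def opSMulHom (R : Type*) {M : Type*} [Ring R] [AddCommGroup M] [Module R M] [Module Rᵐᵒᵖ M]
    [SMulCommClass R Rᵐᵒᵖ M] (r : R) : M →ₗ[R] M where
  toFun := fun m => op r • m
  map_add' := fun a b => smul_add _ a b
  map_smul' := fun t m => (smul_comm t (op r) m).symm

@[simp] lemma opSMulHom_apply (r : R) (m : M) : opSMulHom R r m = op r • m := rfl

/-- factoring a linear map through the range of another one -/
noncomputable def LinearMap.factorRange {R A B C : Type*} [Ring R] [AddCommGroup A]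
    [AddCommGroup B] [AddCommGroup C] [Module R A] [Module R B] [Module R C]
    (p : A →ₗ[R] B) (h : A →ₗ[R] C) (hk : LinearMap.ker p ≤ LinearMap.ker h) :
    ↥(LinearMap.range p) →ₗ[R] C :=
  ((LinearMap.ker p).liftQ h hk) ∘ₗ (p.quotKerEquivRange.symm : _ ≃ₗ[R] _).toLinearMap

lemma LinearMap.factorRange_apply {R A B C : Type*} [Ring R] [AddCommGroup A]
    [AddCommGroup B] [AddCommGroup C] [Module R A] [Module R B] [Module R C]
    (p : A →ₗ[R] B) (h : A →ₗ[R] C) (hk : LinearMap.ker p ≤ LinearMap.ker h) (a : A)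
    (hmem : p a ∈ LinearMap.range p) :
    p.factorRange h hk ⟨p a, hmem⟩ = h a := by
  unfold LinearMap.factorRange
  simp only [LinearMap.comp_apply, LinearEquiv.coe_coe]
  rw [show (⟨p a, hmem⟩ : ↥(LinearMap.range p)) = ⟨p a, LinearMap.mem_range_self p a⟩ from rfl,
    p.quotKerEquivRange_symm_apply_image a]
  simp

theorem IsGenChar.graph_unit [Finite M] [Finite R] (hχ : IsGenChar R M χ) (k : ℕ)
    (Γ : Submodule R (M × M))
    (hmeas : Nat.card (M × M) - Nat.card ↥Γ ≤ k)
    (h1 : Γ ⊓ LinearMap.ker (LinearMap.fst R M M) = ⊥)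
    (h2 : Γ ⊓ LinearMap.ker (LinearMap.snd R M M) = ⊥) :
    ∃ u : Rˣ, ∀ p ∈ Γ, p.2 = op (u : R) • p.1 := by
  classical
  induction k using Nat.strong_induction_on generalizing Γ with
  | _ k ih =>
  -- the two coordinate maps on Γ
  set fstΓ : ↥Γ →ₗ[R] M := (LinearMap.fst R M M) ∘ₗ Γ.subtype with hfstΓ
  set sndΓ : ↥Γ →ₗ[R] M := (LinearMap.snd R M M) ∘ₗ Γ.subtype with hsndΓ
  have hinj1 : Function.Injective fstΓ := by
    rw [← LinearMap.ker_eq_bot]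
    refine (Submodule.eq_bot_iff _).mpr fun q hq => ?_
    have : (q : M × M) ∈ Γ ⊓ LinearMap.ker (LinearMap.fst R M M) :=
      ⟨q.2, by simpa [hfstΓ] using hq⟩
    rw [h1] at this
    exact Subtype.ext (by simpa using this)
  have hinj2 : Function.Injective sndΓ := by
    rw [← LinearMap.ker_eq_bot]
    refine (Submodule.eq_bot_iff _).mpr fun q hq => ?_
    have : (q : M × M) ∈ Γ ⊓ LinearMap.ker (LinearMap.snd R M M) :=
      ⟨q.2, by simpa [hsndΓ] using hq⟩
    rw [h2] at this
    exact Subtype.ext (by simpa using this)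
  set E := LinearMap.range fstΓ with hE
  set F := LinearMap.range sndΓ with hF
  -- the graph is the graph of a linear map E → M, given by some r₀
  have hkerle : LinearMap.ker fstΓ ≤ LinearMap.ker sndΓ := by
    rw [LinearMap.ker_eq_bot.mpr hinj1]; exact bot_le
  obtain ⟨r₀, hr₀⟩ := hχ.repr_one E (fstΓ.factorRange sndΓ hkerle)
  have key : ∀ p ∈ Γ, p.2 = op r₀ • p.1 := by
    intro p hp
    have h3 := LinearMap.factorRange_apply fstΓ sndΓ hkerle ⟨p, hp⟩
      (LinearMap.mem_range_self _ _)
    have h4 := hr₀ ⟨fstΓ ⟨p, hp⟩, LinearMap.mem_range_self _ _⟩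
    rw [h4] at h3
    exact h3.symm
  by_cases hker : LinearMap.ker (opSMulHom R (M := M) r₀) = ⊥
  · have hrinj : Function.Injective fun m : M => op r₀ • m := by
      have := LinearMap.ker_eq_bot.mp hker
      intro a b hab
      exact this (show opSMulHom R r₀ a = opSMulHom R r₀ b from hab)
    have hu := hχ.isUnit_of_op_injective hrinj
    refine ⟨hu.unit, fun p hp => ?_⟩
    rw [hu.unit_spec]
    exact key p hp
  · -- find an atom S inside the kernel
    haveI : Finite (Submodule R M) :=
      Finite.of_injective (SetLike.coe) SetLike.coe_injective
    haveI : IsAtomic (Submodule R M) := inferInstance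
    obtain ⟨S, hSatom, hSle⟩ :=
      (eq_bot_or_exists_atom_le (LinearMap.ker (opSMulHom R (M := M) r₀))).resolve_left hker
    obtain ⟨s₀, hs₀⟩ := Submodule.exists_mem_ne_zero_of_ne_bot hSatom.1
    have hES : E ⊓ S = ⊥ := by
      refine (Submodule.eq_bot_iff _).mpr fun x hx => ?_
      obtain ⟨⟨q, hq⟩, hfx⟩ := hx.1
      have hx2 : op r₀ • x = 0 := hSle hx.2
      have hq1 : q.1 = x := hfx
      have hq2 : q.2 = 0 := by rw [key q hq, hq1, hx2]
      have hqb : q ∈ Γ ⊓ LinearMap.ker (LinearMap.snd R M M) := by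
        refine ⟨hq, ?_⟩
        simpa [LinearMap.mem_ker] using hq2
      rw [h2] at hqb
      have hq0 : q = 0 := hqb
      rw [← hq1, hq0]
      rfl
    -- there is a hom φ : S → M whose range is not inside F
    have hhom : ∃ φ : ↥S →ₗ[R] M, ∃ s : ↥S, φ s ∉ F := by
      by_contra hall
      push_neg at hall
      -- injection (S →ₗ E) × (S →ₗ S) ↪ (S →ₗ M)
      set J1 : ((↥S →ₗ[R] ↥E) × (↥S →ₗ[R] ↥S)) → (↥S →ₗ[R] M) :=
        fun ab => E.subtype ∘ₗ ab.1 + S.subtype ∘ₗ ab.2 with hJ1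
      have hJ1inj : Function.Injective J1 := by
        intro a b hab
        have h5 : ∀ x : ↥S, ((a.1 x : M) + (a.2 x : M)) = ((b.1 x : M) + (b.2 x : M)) :=
          fun x => congrArg (fun f => f x) hab
        have h6 : ∀ x : ↥S, (a.1 x : M) = (b.1 x : M) ∧ (a.2 x : M) = (b.2 x : M) := by
          intro x
          have hsub : (a.1 x : M) - (b.1 x : M) = (b.2 x : M) - (a.2 x : M) := by
            rw [sub_eq_sub_iff_add_eq_add, h5 x, add_comm]
          have hmem : ((a.1 x : M) - (b.1 x : M)) ∈ E ⊓ S := by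
            constructor
            · exact sub_mem (a.1 x).2 (b.1 x).2
            · rw [hsub]
              exact sub_mem (b.2 x).2 (a.2 x).2
          rw [hES] at hmem
          have h7 : (a.1 x : M) = (b.1 x : M) :=
            sub_eq_zero.mp ((Submodule.mem_bot R).mp hmem)
          refine ⟨h7, ?_⟩
          have h8 : (b.2 x : M) - (a.2 x : M) = 0 := by
            rw [← hsub, h7, sub_self]
          exact (sub_eq_zero.mp h8).symm
        refine Prod.ext ?_ ?_
        · ext x; exact (h6 x).1
        · ext x; exact (h6 x).2
      -- injection (S →ₗ M) ↪ (S →ₗ E)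
      set eEF : ↥F ≃ₗ[R] ↥E :=
        ((LinearEquiv.ofInjective sndΓ hinj2).symm.trans (LinearEquiv.ofInjective fstΓ hinj1))
        with heEF
      set J2 : (↥S →ₗ[R] M) → (↥S →ₗ[R] ↥E) :=
        fun φ => eEF.toLinearMap ∘ₗ (φ.codRestrict F (fun s => hall φ s)) with hJ2
      have hJ2inj : Function.Injective J2 := by
        intro a b hab
        ext x
        have := congrArg (fun f => eEF.symm (f x)) hab
        simp only [hJ2, LinearMap.comp_apply, LinearEquiv.coe_toLinearMap,
          LinearEquiv.symm_apply_apply] at this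
        exact congrArg Subtype.val this
      have hcard : Nat.card ((↥S →ₗ[R] ↥E) × (↥S →ₗ[R] ↥S)) ≤ Nat.card (↥S →ₗ[R] ↥E) := by
        haveI : Finite (↥S →ₗ[R] ↥E) :=
          Finite.of_injective (fun f => (f : ↥S → ↥E)) LinearMap.coe_injective
        exact Nat.card_le_card_of_injective _ (hJ2inj.comp hJ1inj)
      rw [Nat.card_prod] at hcard
      haveI : Finite (↥S →ₗ[R] ↥E) :=
        Finite.of_injective (fun f => (f : ↥S → ↥E)) LinearMap.coe_injective
      haveI : Finite (↥S →ₗ[R] ↥S) :=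
        Finite.of_injective (fun f => (f : ↥S → ↥S)) LinearMap.coe_injective
      have hpos : 0 < Nat.card (↥S →ₗ[R] ↥E) := Nat.card_pos
      have hb : Nat.card (↥S →ₗ[R] ↥S) ≤ 1 := by
        by_contra hb
        push_neg at hb
        nlinarith [hcard, hpos, hb]
      have : Nontrivial (↥S →ₗ[R] ↥S) := by
        refine ⟨LinearMap.id, 0, fun hid => ?_⟩
        have := congrArg (fun f => f ⟨s₀, hs₀.1⟩) hid
        simp only [LinearMap.id_coe, id_eq, LinearMap.zero_apply] at this
        exact hs₀.2 (by simpa using congrArg Subtype.val this)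
      rw [← Finite.one_lt_card_iff_nontrivial] at this
      omega
    obtain ⟨φ, sbad, hsbad⟩ := hhom
    -- φ is injective and its range misses F
    have hT : Submodule.comap φ F = ⊥ := by
      have hne : Submodule.comap φ F ≠ ⊤ := by
        intro h
        exact hsbad (by have : sbad ∈ Submodule.comap φ F := h ▸ Submodule.mem_top; exact this)
      have hlt : Submodule.map S.subtype (Submodule.comap φ F) < S := by
        refine lt_of_le_of_ne (Submodule.map_subtype_le _ _) fun hEq => hne ?_
        have := Submodule.map_injective_of_injective S.injective_subtype
          (hEq.trans (Submodule.map_subtype_top S).symm)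
        exact this
      have hbot := hSatom.2 _ hlt
      have := Submodule.map_injective_of_injective S.injective_subtype
        (hbot.trans (Submodule.map_bot S.subtype).symm)
      exact this
    have hφ0 : ∀ s : ↥S, φ s ∈ F → s = 0 := by
      intro s hs
      have : s ∈ Submodule.comap φ F := hs
      rw [hT] at this
      exact this
    have hφinj : ∀ s : ↥S, φ s = 0 → s = 0 := fun s hs => hφ0 s (hs ▸ F.zero_mem)
    -- enlarge the graph
    set pairΓ : ↥S →ₗ[R] M × M := (S.subtype).prod φ with hpairΓ
    set Γ' : Submodule R (M × M) := Γ ⊔ LinearMap.range pairΓ with hΓ'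
    have hmem' : ∀ x ∈ Γ', ∃ p ∈ Γ, ∃ s : ↥S, p + ((s : M), φ s) = x := by
      intro x hx
      obtain ⟨p, hp, q, hq, hpq⟩ := Submodule.mem_sup.mp hx
      obtain ⟨s, hs⟩ := hq
      exact ⟨p, hp, s, by rw [← hpq, ← hs]; rfl⟩
    have h1' : Γ' ⊓ LinearMap.ker (LinearMap.fst R M M) = ⊥ := by
      refine (Submodule.eq_bot_iff _).mpr fun x hx => ?_
      obtain ⟨p, hp, s, hps⟩ := hmem' x hx.1
      have hx1 : p.1 + (s : M) = 0 := by
        have := hx.2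
        replace this : x.1 = 0 := LinearMap.mem_ker.mp this
        rw [← hps] at this
        exact this
      have hp1 : p.1 ∈ E ⊓ S := by
        constructor
        · exact ⟨⟨p, hp⟩, rfl⟩
        · rw [eq_neg_of_add_eq_zero_left hx1]
          exact S.neg_mem s.2
      rw [hES] at hp1
      have hp10 : p.1 = 0 := hp1
      have hs0 : s = 0 := by
        have : (s : M) = 0 := by rw [hp10] at hx1; simpa using hx1
        exact Subtype.ext this
      have hp0 : p = 0 := by
        have : p ∈ Γ ⊓ LinearMap.ker (LinearMap.fst R M M) := ⟨hp, by simpa using hp10⟩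
        rw [h1] at this; exact this
      rw [← hps, hp0, hs0]
      simp
    have h2' : Γ' ⊓ LinearMap.ker (LinearMap.snd R M M) = ⊥ := by
      refine (Submodule.eq_bot_iff _).mpr fun x hx => ?_
      obtain ⟨p, hp, s, hps⟩ := hmem' x hx.1
      have hx2 : p.2 + φ s = 0 := by
        have := hx.2
        replace this : x.2 = 0 := LinearMap.mem_ker.mp this
        rw [← hps] at this
        exact this
      have hs0 : s = 0 := by
        refine hφ0 s ?_
        rw [eq_neg_of_add_eq_zero_right hx2]
        exact F.neg_mem ⟨⟨p, hp⟩, rfl⟩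
      have hp2 : p.2 = 0 := by
        rw [hs0] at hx2; simpa using hx2
      have hp0 : p = 0 := by
        have : p ∈ Γ ⊓ LinearMap.ker (LinearMap.snd R M M) := ⟨hp, by simpa using hp2⟩
        rw [h2] at this; exact this
      rw [← hps, hp0, hs0]
      simp
    -- strictness
    have hstrict : Γ < Γ' := by
      refine lt_of_le_of_ne le_sup_left fun hEq => ?_
      have hmemS : (((⟨s₀, hs₀.1⟩ : ↥S) : M), φ ⟨s₀, hs₀.1⟩) ∈ Γ := by
        rw [hEq]
        exact Submodule.mem_sup_right ⟨⟨s₀, hs₀.1⟩, rfl⟩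
      have := key _ hmemS
      have hz : op r₀ • (s₀ : M) = 0 := hSle hs₀.1
      simp only [hz] at this
      have := hφinj ⟨s₀, hs₀.1⟩ this
      exact hs₀.2 (by simpa using congrArg Subtype.val this)
    have hcards : Nat.card ↥Γ < Nat.card ↥Γ' := by
      have e1 : Nat.card ↥Γ = ((Γ : Set (M × M))).ncard := Nat.card_coe_set_eq _
      have e2 : Nat.card ↥Γ' = ((Γ' : Set (M × M))).ncard := Nat.card_coe_set_eq _
      rw [e1, e2]
      exact Set.ncard_lt_ncard (SetLike.coe_ssubset_coe.mpr hstrict) (Set.toFinite _)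
    have hcard2 : Nat.card ↥Γ' ≤ Nat.card (M × M) :=
      Nat.card_le_card_of_injective _ Subtype.val_injective
    have hmeas' : Nat.card (M × M) - Nat.card ↥Γ' < k := by omega
    obtain ⟨u, hu⟩ := ih _ hmeas' Γ' le_rfl h1' h2'
    exact ⟨u, fun p hp => hu p (Submodule.mem_sup_left hp)⟩

end Graph

section LemC

variable {R M : Type*} [Ring R] [AddCommGroup M] [Module R M] [Module Rᵐᵒᵖ M]
  [SMulCommClass R Rᵐᵒᵖ M] {χ : AddChar M ℂˣ}

/-- representation with a unit coefficient at a distinguished coordinate -/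
theorem IsGenChar.repr_pi_unit [Finite M] [Finite R] (hχ : IsGenChar R M χ)
    {ι : Type*} [Fintype ι] [DecidableEq ι] (D : Submodule R (ι → M))
    (g : ↥D →ₗ[R] M) (j : ι)
    (hinj : ∀ d : ↥D, (∀ i, i ≠ j → (d : ι → M) i = 0) → (d : ι → M) j ≠ 0 → g d ≠ 0) :
    ∃ r : ι → R, IsUnit (r j) ∧ ∀ d : ↥D, g d = ∑ i, op (r i) • (d : ι → M) i := by
  classical
  -- the slice at coordinate j
  set sing : M →ₗ[R] (ι → M) := LinearMap.single R (fun _ : ι => M) j with hsing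
  set Esl : Submodule R M := Submodule.comap sing D with hEsl
  have hm1mem : ∀ e : ↥Esl, sing (e : M) ∈ D := fun e => e.2
  set m1 : ↥Esl →ₗ[R] ↥D := LinearMap.codRestrict D (sing ∘ₗ Esl.subtype)
    (fun e => hm1mem e) with hm1
  set pairS : ↥Esl →ₗ[R] M × M := (Esl.subtype).prod (g ∘ₗ m1) with hpairS
  set Γ : Submodule R (M × M) := LinearMap.range pairS with hΓ
  have hval : ∀ x ∈ Γ, ∃ e : ↥Esl, ((e : M), g (m1 e)) = x := by
    intro x hx
    obtain ⟨e, he⟩ := hx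
    exact ⟨e, by rw [← he]; rfl⟩
  have hg1 : Γ ⊓ LinearMap.ker (LinearMap.fst R M M) = ⊥ := by
    refine (Submodule.eq_bot_iff _).mpr fun x hx => ?_
    obtain ⟨e, he⟩ := hval x hx.1
    have h0 : (e : M) = 0 := by
      have := hx.2
      rw [← he] at this
      simpa using this
    have he0 : e = 0 := Subtype.ext h0
    rw [← he, he0]
    simp
  have hg2 : Γ ⊓ LinearMap.ker (LinearMap.snd R M M) = ⊥ := by
    refine (Submodule.eq_bot_iff _).mpr fun x hx => ?_
    obtain ⟨e, he⟩ := hval x hx.1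
    have h0 : g (m1 e) = 0 := by
      have := hx.2
      rw [← he] at this
      simpa using this
    have hcoords : ∀ i, i ≠ j → ((m1 e : ↥D) : ι → M) i = 0 := by
      intro i hij
      show (sing (e : M)) i = 0
      simp [hsing, LinearMap.single_apply, Pi.single_eq_of_ne hij]
    have hjcoord : ((m1 e : ↥D) : ι → M) j = (e : M) := by
      show (sing (e : M)) j = (e : M)
      simp [hsing, LinearMap.single_apply]
    have h0e : (e : M) = 0 := by
      by_contra hne
      exact hinj (m1 e) hcoords (by rw [hjcoord]; exact hne) h0
    have he0 : e = 0 := Subtype.ext h0e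
    rw [← he, he0]
    simp
  obtain ⟨u, hu⟩ := hχ.graph_unit (Nat.card (M × M) - Nat.card ↥Γ) Γ le_rfl hg1 hg2
  have huE : ∀ e : ↥Esl, g (m1 e) = op (u : R) • (e : M) := by
    intro e
    exact hu ((e : M), g (m1 e)) ⟨e, rfl⟩
  -- subtract the unit part
  set pr : ↥D →ₗ[R] M := (LinearMap.proj j) ∘ₗ D.subtype with hpr
  set h : ↥D →ₗ[R] M := g - (opSMulHom R (u : R)) ∘ₗ pr with hh
  set z : (ι → M) →ₗ[R] (ι → M) := LinearMap.id - sing ∘ₗ (LinearMap.proj j) with hz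
  set p' : ↥D →ₗ[R] (ι → M) := z ∘ₗ D.subtype with hp'
  have hzcoord : ∀ (v : ι → M) (i : ι), z v i = if i = j then 0 else v i := by
    intro v i
    by_cases hij : i = j
    · subst hij
      simp [hz, hsing, LinearMap.single_apply]
    · simp [hz, hsing, LinearMap.single_apply, Pi.single_eq_of_ne hij, hij]
  have hker : LinearMap.ker p' ≤ LinearMap.ker h := by
    intro d hd
    have hzd : z (d : ι → M) = 0 := hd
    have hcoords : ∀ i, i ≠ j → (d : ι → M) i = 0 := by
      intro i hij
      have := congrArg (fun f => f i) hzd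
      simpa [hzcoord, hij] using this
    have hdval : (d : ι → M) = sing ((d : ι → M) j) := by
      funext i
      by_cases hij : i = j
      · subst hij; simp [hsing, LinearMap.single_apply]
      · simp [hsing, LinearMap.single_apply, Pi.single_eq_of_ne hij, hcoords i hij]
    have hmem : (d : ι → M) j ∈ Esl := by
      show sing ((d : ι → M) j) ∈ D
      rw [← hdval]; exact d.2
    have hd_eq : m1 ⟨(d : ι → M) j, hmem⟩ = d := by
      apply Subtype.ext
      show sing ((d : ι → M) j) = (d : ι → M)
      rw [← hdval]
    have := huE ⟨(d : ι → M) j, hmem⟩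
    rw [hd_eq] at this
    show h d = 0
    rw [hh]
    simp only [LinearMap.sub_apply, LinearMap.comp_apply, opSMulHom_apply]
    rw [sub_eq_zero]
    exact this
  obtain ⟨s, hs⟩ := hχ.repr_pi (LinearMap.range p') (p'.factorRange h hker)
  set r : ι → R := Function.update s j (u : R) with hr
  refine ⟨r, by rw [hr]; simp, fun d => ?_⟩
  have hfac := LinearMap.factorRange_apply p' h hker d (LinearMap.mem_range_self _ _)
  have hsum := hs ⟨p' d, LinearMap.mem_range_self _ _⟩
  rw [hfac] at hsum
  -- h d = ∑ i, op (s i) • (z d) i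
  have hzd : ((⟨p' d, LinearMap.mem_range_self _ _⟩ : ↥(LinearMap.range p')) : ι → M)
      = z (d : ι → M) := rfl
  rw [hzd] at hsum
  have hterm : ∀ i, op (r i) • (d : ι → M) i
      = op (s i) • (z (d : ι → M)) i + (if i = j then op (u : R) • (d : ι → M) j else 0) := by
    intro i
    by_cases hij : i = j
    · subst hij
      simp [hr, hzcoord]
    · simp [hr, Function.update_of_ne hij, hzcoord, hij]
  have hgd : g d = h d + op (u : R) • (d : ι → M) j := by
    rw [hh]
    simp only [LinearMap.sub_apply, LinearMap.comp_apply, opSMulHom_apply]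
    have : pr d = (d : ι → M) j := rfl
    rw [this]
    abel
  rw [hgd, hsum]
  rw [Finset.sum_congr rfl (fun i _ => hterm i), Finset.sum_add_distrib]
  congr 1
  simp

end LemC

section Matrixx

lemma isUnit_of_lowerTriangular {n : ℕ} {S : Type*} [Ring S] (A : Matrix (Fin n) (Fin n) S)
    (htri : ∀ i j : Fin n, i < j → A i j = 0) (hdiag : ∀ i, IsUnit (A i i)) : IsUnit A := by
  classical
  choose ufun hu using hdiag
  set Dg : Matrix (Fin n) (Fin n) S := Matrix.diagonal (fun i => (ufun i : S)) with hDg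
  set Dinv : Matrix (Fin n) (Fin n) S :=
    Matrix.diagonal (fun i => (((ufun i)⁻¹ : Sˣ) : S)) with hDinv
  have hDgDinv : Dg * Dinv = 1 := by
    rw [hDg, hDinv, Matrix.diagonal_mul_diagonal]
    have : (fun i => (ufun i : S) * (((ufun i)⁻¹ : Sˣ) : S)) = fun _ => (1 : S) :=
      funext fun i => Units.mul_inv _
    rw [this, Matrix.diagonal_one]
  have hDinvDg : Dinv * Dg = 1 := by
    rw [hDg, hDinv, Matrix.diagonal_mul_diagonal]
    have : (fun i => (((ufun i)⁻¹ : Sˣ) : S) * (ufun i : S)) = fun _ => (1 : S) :=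
      funext fun i => Units.inv_mul _
    rw [this, Matrix.diagonal_one]
  have hDgUnit : IsUnit Dg := ⟨⟨Dg, Dinv, hDgDinv, hDinvDg⟩, rfl⟩
  set N : Matrix (Fin n) (Fin n) S := A - Dg with hN
  have hNz : ∀ i j : Fin n, i.1 ≤ j.1 → N i j = 0 := by
    intro i j hij
    rcases lt_or_eq_of_le hij with hlt | heq
    · have h1 : A i j = 0 := htri i j (Fin.lt_def.mpr hlt)
      have h2 : Dg i j = 0 := Matrix.diagonal_apply_ne _ (fun hEq => by
        rw [hEq] at hlt; omega)
      simp [hN, Matrix.sub_apply, h1, h2]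
    · have heq' : i = j := Fin.ext heq
      subst heq'
      simp [hN, Matrix.sub_apply, hDg, Matrix.diagonal_apply_eq, hu i]
  set X : Matrix (Fin n) (Fin n) S := Dinv * N with hX
  have hXz : ∀ i j : Fin n, i.1 ≤ j.1 → X i j = 0 := by
    intro i j hij
    rw [hX, hDinv, Matrix.diagonal_mul, hNz i j hij, mul_zero]
  have hnil : ∀ k : ℕ, ∀ i j : Fin n, i.1 < j.1 + k → (X ^ k) i j = 0 := by
    intro k
    induction k with
    | zero =>
      intro i j hij
      have : i ≠ j := fun hEq => by rw [hEq] at hij; omega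
      simp [Matrix.one_apply_ne this]
    | succ k ihk =>
      intro i j hij
      rw [pow_succ, Matrix.mul_apply]
      refine Finset.sum_eq_zero fun l _ => ?_
      by_cases hl : i.1 < l.1 + k
      · rw [ihk i l hl, zero_mul]
      · have : l.1 ≤ j.1 := by omega
        rw [hXz l j this, mul_zero]
  have hXn : X ^ n = 0 := by
    ext i j
    rw [hnil n i j (by omega)]
    simp
  have hone : IsUnit (1 + X) := IsNilpotent.isUnit_one_add ⟨n, hXn⟩
  have hA : A = Dg * (1 + X) := by
    rw [mul_add, mul_one, hX, ← mul_assoc, hDgDinv, one_mul, hN]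
    abel
  rw [hA]
  exact hDgUnit.mul hone

end Matrixx


open Finset Classical in
lemma rtWeight_le_iff {M₀ : Type*} [Zero M₀] {n : ℕ} (v : Fin n → M₀) (k : ℕ) :
    rtWeight v ≤ k ↔ ∀ i : Fin n, v i ≠ 0 → i.1 + 1 ≤ k := by
  unfold rtWeight
  rw [Finset.sup_le_iff]
  constructor
  · intro H i hi; exact H i (Finset.mem_filter.mpr ⟨Finset.mem_univ _, hi⟩)
  · intro H i hi; exact H i (Finset.mem_filter.mp hi).2

open Finset Classical in
lemma exists_eq_rtWeight {M₀ : Type*} [Zero M₀] {n : ℕ} (v : Fin n → M₀)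
    (h : rtWeight v ≠ 0) : ∃ i : Fin n, v i ≠ 0 ∧ i.1 + 1 = rtWeight v := by
  unfold rtWeight at h ⊢
  have hne : (Finset.univ.filter (fun i : Fin n => v i ≠ 0)).Nonempty := by
    by_contra hcon
    rw [Finset.not_nonempty_iff_eq_empty] at hcon
    rw [hcon] at h
    simp at h
  obtain ⟨i, hmem, heq⟩ := Finset.exists_mem_eq_sup _ hne (fun i : Fin n => i.1 + 1)
  exact ⟨i, (Finset.mem_filter.mp hmem).2, heq.symm⟩


/-- MacWilliams extension theorem for the RT-weight: if `M` is a finite Frobenius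
bimodule over a finite ring `R`, `C ⊆ M^n` a left `R`-submodule and `f : C → M^n` a left
`R`-linear map preserving the Rosenbloom–Tsfasman weight, then there is an invertible
lower triangular matrix `A ∈ GL_n(R)` with `f(v) = vA` for all `v ∈ C`; in particular `f`
extends to an RT-weight-preserving automorphism of `M^n`. -/
theorem rt_extension_theorem
    (R M : Type*) [Ring R] [Fintype R] [AddCommGroup M] [Fintype M]
    [Module R M] [Module Rᵐᵒᵖ M] [SMulCommClass R Rᵐᵒᵖ M]
    (hM : IsFrobeniusBimodule R M)
    (n : ℕ) (C : Submodule R (Fin n → M)) (f : C →ₗ[R] (Fin n → M))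
    (hf : ∀ v : C, rtWeight (f v) = rtWeight (v : Fin n → M)) :
    ∃ A : (Matrix (Fin n) (Fin n) R)ˣ,
      (∀ i j : Fin n, i < j → A.val i j = 0) ∧
      ∀ v : C, ∀ j : Fin n, f v j = ∑ i : Fin n, op (A.val i j) • (v : Fin n → M) i := by
  classical
  obtain ⟨χ, hχ⟩ := hM
  -- truncation maps
  set trunc : Fin n → ((Fin n → M) →ₗ[R] (Fin n → M)) := fun j =>
    LinearMap.pi (fun i => if j ≤ i then (LinearMap.proj i : (Fin n → M) →ₗ[R] M) else 0)
    with htrunc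
  have htr : ∀ (j : Fin n) (v : Fin n → M) (i : Fin n),
      trunc j v i = if j ≤ i then v i else 0 := by
    intro j v i
    rw [htrunc]
    simp only [LinearMap.pi_apply]
    by_cases h : j ≤ i <;> simp [h]
  -- coordinates of f v only depend on coordinates ≥ j
  have H : ∀ j : Fin n, ∃ r : Fin n → R, IsUnit (r j) ∧
      ∀ v : ↥C, f v j = ∑ i, op (r i) • (trunc j (v : Fin n → M)) i := by
    intro j
    set p' : ↥C →ₗ[R] (Fin n → M) := (trunc j) ∘ₗ C.subtype with hp'
    set h : ↥C →ₗ[R] M := (LinearMap.proj j) ∘ₗ f with hh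
    have hker : LinearMap.ker p' ≤ LinearMap.ker h := by
      intro v hv
      have hz : trunc j (v : Fin n → M) = 0 := hv
      have hcoords : ∀ i : Fin n, j ≤ i → (v : Fin n → M) i = 0 := by
        intro i hij
        have := congrArg (fun w => w i) hz
        simpa [htr j _ i, hij] using this
      have hwv : rtWeight (v : Fin n → M) ≤ j.1 := by
        rw [rtWeight_le_iff]
        intro i hi
        by_contra hcon
        push_neg at hcon
        exact hi (hcoords i (Fin.le_def.mpr (by omega)))
      have hwf : rtWeight (f v) ≤ j.1 := by rw [hf v]; exact hwv
      show f v j = 0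
      by_contra hne
      have := (rtWeight_le_iff (f v) j.1).mp hwf j hne
      omega
    set g : ↥(LinearMap.range p') →ₗ[R] M := p'.factorRange h hker with hg
    have happ : ∀ v : ↥C, g ⟨p' v, LinearMap.mem_range_self _ _⟩ = f v j := by
      intro v
      rw [hg, LinearMap.factorRange_apply]
      rfl
    have hinj : ∀ d : ↥(LinearMap.range p'),
        (∀ i, i ≠ j → (d : Fin n → M) i = 0) → (d : Fin n → M) j ≠ 0 → g d ≠ 0 := by
      intro d hzero hjne
      obtain ⟨v, hv⟩ := d.2
      have hdv : d = ⟨p' v, LinearMap.mem_range_self _ _⟩ := Subtype.ext hv.symm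
      have hvj : (v : Fin n → M) j = (d : Fin n → M) j := by
        rw [← hv]
        show (v : Fin n → M) j = (trunc j (v : Fin n → M)) j
        rw [htr]
        simp
      have hvgt : ∀ i : Fin n, j.1 < i.1 → (v : Fin n → M) i = 0 := by
        intro i hij
        have h1 : (trunc j (v : Fin n → M)) i = (d : Fin n → M) i := by
          rw [← hv]
          rfl
        have h2 : (d : Fin n → M) i = 0 := hzero i (fun hEq => by rw [hEq] at hij; omega)
        have h3 := htr j (v : Fin n → M) i
        rw [h1, h2] at h3
        have hji : j ≤ i := Fin.le_def.mpr (by omega)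
        simpa [hji] using h3.symm
      have hw : rtWeight (v : Fin n → M) = j.1 + 1 := by
        refine le_antisymm ?_ ?_
        · rw [rtWeight_le_iff]
          intro i hi
          by_contra hcon
          push_neg at hcon
          exact hi (hvgt i (by omega))
        · have hne : (v : Fin n → M) j ≠ 0 := by rw [hvj]; exact hjne
          have : rtWeight (v : Fin n → M) ≤ rtWeight (v : Fin n → M) := le_rfl
          have := (rtWeight_le_iff (v : Fin n → M) (rtWeight (v : Fin n → M))).mp this j hne
          omega
      have hwf : rtWeight (f v) = j.1 + 1 := by rw [hf v, hw]
      obtain ⟨i, hine, hieq⟩ := exists_eq_rtWeight (f v) (by omega)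
      have hij : i = j := Fin.ext (by omega)
      rw [hdv, happ v]
      rw [hij] at hine
      exact hine
    obtain ⟨r, hrunit, hrval⟩ := hχ.repr_pi_unit (LinearMap.range p') g j hinj
    refine ⟨r, hrunit, fun v => ?_⟩
    rw [← happ v, hrval ⟨p' v, LinearMap.mem_range_self _ _⟩]
    rfl
  choose rr hrunit hrval using H
  set A : Matrix (Fin n) (Fin n) R :=
    Matrix.of (fun i j => if j ≤ i then rr j i else 0) with hA
  have htri : ∀ i j : Fin n, i < j → A i j = 0 := by
    intro i j hij
    have : ¬ j ≤ i := not_le.mpr hij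
    simp [hA, this]
  have hdiag : ∀ j : Fin n, IsUnit (A j j) := by
    intro j
    have : A j j = rr j j := by simp [hA]
    rw [this]
    exact hrunit j
  have hAunit : IsUnit A := isUnit_of_lowerTriangular A htri hdiag
  refine ⟨hAunit.unit, ?_, ?_⟩
  · intro i j hij
    rw [IsUnit.unit_spec]
    exact htri i j hij
  · intro v j
    rw [IsUnit.unit_spec]
    rw [hrval j v]
    refine Finset.sum_congr rfl fun i _ => ?_
    rw [htr j _ i]
    by_cases hij : j ≤ i
    · simp [hA, hij]
    · simp [hA, hij]
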